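/- arXiv:1803.00632 — 2 statements merged into one kernel-verified Lean document; each statement's English description precedes it below -/
import Mathlib

section
/- For real a, b and real β > 0, ∫₀^∞ (cos(a x) − cos(b x))/(x · sinh(β x)) dx = ln cosh(b π/(2β)) − ln cosh(a π/(2β)). -/
open Real MeasureTheory Set Filter Topology Function Finset

-- |1 - cos y| ≤ y^2/2
lemma one_sub_cos_le (y : ℝ) : |1 - Real.cos y| ≤ y ^ 2 / 2 := by
  have h1 : Real.cos y = Real.cos (2 * (y / 2)) := by ring_nf
  have h2 : Real.cos (2 * (y / 2)) = Real.cos (y/2) ^ 2 - Real.sin (y/2) ^ 2 :=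
    Real.cos_two_mul' _
  have h3 : Real.sin (y/2) ^ 2 ≤ (y/2) ^ 2 := by
    have := Real.abs_sin_le_abs (x := y/2)
    nlinarith [abs_nonneg (Real.sin (y/2)), sq_abs (Real.sin (y/2)), sq_abs (y/2),
      abs_nonneg (y/2)]
  have h4 : Real.cos (y/2) ^ 2 + Real.sin (y/2) ^ 2 = 1 := Real.cos_sq_add_sin_sq _
  rw [abs_le]
  constructor <;> nlinarith [Real.sin_sq_le_one (y/2), Real.sin_sq_add_cos_sq (y/2),
    sq_nonneg (Real.sin (y/2)), sq_nonneg (y/2)]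

lemma cos_diff_div_le (a b x : ℝ) (hx : 0 < x) :
    |(Real.cos (a*x) - Real.cos (b*x)) / x| ≤ (a^2 + b^2)/2 * x := by
  have h1 := one_sub_cos_le (a*x)
  have h2 := one_sub_cos_le (b*x)
  have : |Real.cos (a*x) - Real.cos (b*x)| ≤ (a^2+b^2)/2 * x^2 := by
    have := abs_sub (1 - Real.cos (b*x)) (1 - Real.cos (a*x))
    calc |Real.cos (a*x) - Real.cos (b*x)| = |(1 - Real.cos (b*x)) - (1 - Real.cos (a*x))| := by
          ring_nf
      _ ≤ |1 - Real.cos (b*x)| + |1 - Real.cos (a*x)| := abs_sub _ _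
      _ ≤ (b*x)^2/2 + (a*x)^2/2 := add_le_add h2 h1
      _ = (a^2+b^2)/2 * x^2 := by ring
  rw [abs_div, abs_of_pos hx, div_le_iff₀ hx]
  calc |Real.cos (a*x) - Real.cos (b*x)| ≤ (a^2+b^2)/2 * x^2 := this
    _ = (a^2+b^2)/2 * x * x := by ring


lemma tendsto_exp_neg_mul {c : ℝ} (hc : 0 < c) :
    Tendsto (fun x : ℝ => Real.exp (-(c*x))) atTop (𝓝 0) := by
  have h : Tendsto (fun x : ℝ => -(c*x)) atTop atBot := by
    have := tendsto_id.const_mul_atTop hc (f := fun x : ℝ => x)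
    exact tendsto_neg_atTop_atBot.comp this
  exact Real.tendsto_exp_atBot.comp h

lemma tendsto_mul_exp_neg_mul {c : ℝ} (hc : 0 < c) :
    Tendsto (fun x : ℝ => x * Real.exp (-(c*x))) atTop (𝓝 0) := by
  have h0 := Real.tendsto_pow_mul_exp_neg_atTop_nhds_zero 1
  simp only [pow_one] at h0
  have hcomp : Tendsto (fun x : ℝ => (c*x) * Real.exp (-(c*x))) atTop (𝓝 0) :=
    h0.comp (tendsto_id.const_mul_atTop hc)
  have := hcomp.div_const c
  simp only [zero_div] at this
  refine this.congr fun x => ?_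
  field_simp

lemma integrableOn_mul_exp {c : ℝ} (hc : 0 < c) :
    IntegrableOn (fun x : ℝ => x * Real.exp (-(c * x))) (Ioi 0) := by
  have hint : IntegrableOn (fun x : ℝ => (2/c) * Real.exp (-(c/2) * x)) (Ioi 0) :=
    ((exp_neg_integrableOn_Ioi 0 (by positivity : (0:ℝ) < c/2)).const_mul (2/c))
  refine Integrable.mono' hint ?_ ?_
  · exact ((continuous_id.mul (Real.continuous_exp.comp (continuous_const.mul continuous_id).neg)).aestronglyMeasurable)
  · filter_upwards [ae_restrict_mem measurableSet_Ioi] with x hx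
    have hx0 : (0:ℝ) < x := hx
    have key : x ≤ Real.exp (c/2*x) / (c/2) := by
      rw [le_div_iff₀ (by positivity : (0:ℝ) < c/2)]
      have := Real.add_one_le_exp (c/2*x); nlinarith
    have h1 : x * Real.exp (-(c*x)) ≤ 2/c * Real.exp (-(c/2)*x) := by
      rw [show -(c*x) = -(c/2*x) + -(c/2)*x by ring, Real.exp_add, ← mul_assoc]
      refine mul_le_mul_of_nonneg_right ?_ (Real.exp_pos _).le
      rw [Real.exp_neg]
      calc x * (Real.exp (c/2*x))⁻¹ ≤ (Real.exp (c/2*x) / (c/2)) * (Real.exp (c/2*x))⁻¹ :=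
            mul_le_mul_of_nonneg_right key (by positivity)
        _ = (Real.exp (c/2*x) * (Real.exp (c/2*x))⁻¹) / (c/2) := by ring
        _ = 2/c := by rw [mul_inv_cancel₀ (Real.exp_pos _).ne']; field_simp
    rw [Real.norm_eq_abs, abs_of_nonneg (by positivity)]
    exact h1

lemma integral_mul_exp {c : ℝ} (hc : 0 < c) :
    ∫ x in Ioi (0:ℝ), x * Real.exp (-(c * x)) = 1 / c ^ 2 := by
  have hderiv : ∀ x ∈ Ici (0:ℝ),
      HasDerivAt (fun x : ℝ => -((x/c + 1/c^2) * Real.exp (-(c*x))))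
        (x * Real.exp (-(c*x))) x := by
    intro x _
    have h1 : HasDerivAt (fun x : ℝ => x/c + 1/c^2) (1/c) x :=
      ((hasDerivAt_id x).div_const c).add_const (1/c^2)
    have h2 : HasDerivAt (fun x : ℝ => Real.exp (-(c*x))) (-c * Real.exp (-(c*x))) x := by
      have h : HasDerivAt (fun x : ℝ => -(c*x)) (-c) x := by
        have h0 := ((hasDerivAt_id x).const_mul c).neg; simp at h0; exact h0
      simpa [mul_comm] using h.exp
    have := (h1.mul h2).neg
    refine this.congr_deriv ?_
    field_simp
    ring
  have htend : Tendsto (fun x : ℝ => -((x/c + 1/c^2) * Real.exp (-(c*x)))) atTop (𝓝 0) := by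
    have h1 : Tendsto (fun x : ℝ => (x/c + 1/c^2) * Real.exp (-(c*x))) atTop (𝓝 0) := by
      have ha := (tendsto_mul_exp_neg_mul hc).div_const c
      have hb := (tendsto_exp_neg_mul hc).const_mul (1/c^2)
      simp only [zero_div, mul_zero] at ha hb
      have := ha.add hb
      simp only [add_zero] at this
      refine this.congr fun x => ?_
      ring
    simpa using h1.neg
  have := integral_Ioi_of_hasDerivAt_of_tendsto' hderiv (integrableOn_mul_exp hc) htend
  rw [this]
  simp


lemma integrableOn_exp_sin {c : ℝ} (t : ℝ) (hc : 0 < c) :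
    IntegrableOn (fun x : ℝ => Real.exp (-(c * x)) * Real.sin (t * x)) (Ioi 0) := by
  refine Integrable.mono' (g := fun x => Real.exp (-c * x))
    (exp_neg_integrableOn_Ioi 0 hc) ?_ ?_
  · exact ((Real.continuous_exp.comp (continuous_const.mul continuous_id).neg).mul
      (Real.continuous_sin.comp (continuous_const.mul continuous_id))).aestronglyMeasurable
  · filter_upwards with x
    rw [Real.norm_eq_abs, abs_mul, abs_of_pos (Real.exp_pos _), neg_mul]
    exact mul_le_of_le_one_right (Real.exp_pos _).le (Real.abs_sin_le_one _)

lemma integral_exp_sin {c : ℝ} (t : ℝ) (hc : 0 < c) :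
    ∫ x in Ioi (0:ℝ), Real.exp (-(c * x)) * Real.sin (t * x) = t / (c^2 + t^2) := by
  have hden : (0:ℝ) < c^2 + t^2 := by positivity
  set F : ℝ → ℝ := fun x =>
    -(Real.exp (-(c * x)) * (c * Real.sin (t * x) + t * Real.cos (t * x))) / (c^2 + t^2) with hF
  have hderiv : ∀ x ∈ Ici (0:ℝ),
      HasDerivAt F (Real.exp (-(c * x)) * Real.sin (t * x)) x := by
    intro x _
    have he : HasDerivAt (fun x : ℝ => Real.exp (-(c*x))) (-c * Real.exp (-(c*x))) x := by
      have h : HasDerivAt (fun x : ℝ => -(c*x)) (-c) x := by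
        have h0 := ((hasDerivAt_id x).const_mul c).neg; simp at h0; exact h0
      simpa [mul_comm] using h.exp
    have hs : HasDerivAt (fun x : ℝ => Real.sin (t*x)) (t * Real.cos (t*x)) x := by
      have h : HasDerivAt (fun x : ℝ => t*x) t x := by
        simpa using (hasDerivAt_id x).const_mul t
      simpa [mul_comm] using h.sin
    have hcos : HasDerivAt (fun x : ℝ => Real.cos (t*x)) (-(t * Real.sin (t*x))) x := by
      have h : HasDerivAt (fun x : ℝ => t*x) t x := by
        simpa using (hasDerivAt_id x).const_mul t
      have := h.cos
      convert this using 1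
      ring
    have hsum : HasDerivAt (fun x : ℝ => c * Real.sin (t*x) + t * Real.cos (t*x))
        (c * (t * Real.cos (t*x)) + t * (-(t * Real.sin (t*x)))) x :=
      ((hs.const_mul c).add (hcos.const_mul t))
    have := ((he.mul hsum).neg).div_const (c^2 + t^2)
    refine this.congr_deriv ?_
    field_simp
    ring
  have htend : Tendsto F atTop (𝓝 0) := by
    have hb : Tendsto (fun x : ℝ => Real.exp (-(c*x))) atTop (𝓝 0) := by
      have h : Tendsto (fun x : ℝ => -(c*x)) atTop atBot :=
        tendsto_neg_atTop_atBot.comp (tendsto_id.const_mul_atTop hc (f := fun x : ℝ => x))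
      exact Real.tendsto_exp_atBot.comp h
    have hbound : ∀ x : ℝ, |F x| ≤ ((|c| + |t|)/(c^2+t^2)) * Real.exp (-(c*x)) := by
      intro x
      rw [hF, abs_div, abs_of_pos hden, div_le_iff₀ hden, abs_neg, abs_mul,
        abs_of_pos (Real.exp_pos _)]
      have h1 : |c * Real.sin (t*x) + t * Real.cos (t*x)| ≤ |c| + |t| := by
        calc |c * Real.sin (t*x) + t * Real.cos (t*x)|
            ≤ |c * Real.sin (t*x)| + |t * Real.cos (t*x)| := abs_add_le _ _
          _ ≤ |c| * 1 + |t| * 1 := by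
              rw [abs_mul, abs_mul]
              exact add_le_add (mul_le_mul_of_nonneg_left (Real.abs_sin_le_one _) (abs_nonneg _))
                (mul_le_mul_of_nonneg_left (Real.abs_cos_le_one _) (abs_nonneg _))
          _ = |c| + |t| := by ring
      calc Real.exp (-(c*x)) * |c * Real.sin (t*x) + t * Real.cos (t*x)|
          ≤ Real.exp (-(c*x)) * (|c| + |t|) :=
            mul_le_mul_of_nonneg_left h1 (Real.exp_pos _).le
        _ = (|c| + |t|) / (c^2+t^2) * Real.exp (-(c*x)) * (c^2+t^2) := by field_simp
    have hz : Tendsto (fun x : ℝ => ((|c| + |t|)/(c^2+t^2)) * Real.exp (-(c*x))) atTop (𝓝 0) := by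
      simpa using hb.const_mul ((|c| + |t|)/(c^2+t^2))
    refine squeeze_zero_norm ?_ hz
    intro x; rw [Real.norm_eq_abs]; exact hbound x
  have := integral_Ioi_of_hasDerivAt_of_tendsto' hderiv (integrableOn_exp_sin t hc) htend
  rw [this, hF]
  simp
  field_simp


lemma frullani_cos {c : ℝ} (a b : ℝ) (hc : 0 < c) (hab : a ≤ b) :
    ∫ x in Ioi (0:ℝ), Real.exp (-(c * x)) * ((Real.cos (a*x) - Real.cos (b*x)) / x)
      = (Real.log (c^2 + b^2) - Real.log (c^2 + a^2)) / 2 := by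
  -- step 1: rewrite integrand as inner integral over t
  have step1 : ∀ x ∈ Ioi (0:ℝ),
      Real.exp (-(c * x)) * ((Real.cos (a*x) - Real.cos (b*x)) / x)
        = ∫ t in Ioc a b, Real.exp (-(c * x)) * Real.sin (t * x) := by
    intro x hx
    have hx0 : x ≠ 0 := ne_of_gt hx
    have h1 : ∫ t in a..b, Real.sin (t * x) = (Real.cos (a*x) - Real.cos (b*x)) / x := by
      rw [intervalIntegral.integral_comp_mul_right Real.sin hx0, integral_sin]
      simp [smul_eq_mul]
      ring
    have h2 : ∫ t in a..b, Real.exp (-(c * x)) * Real.sin (t * x)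
        = Real.exp (-(c * x)) * ((Real.cos (a*x) - Real.cos (b*x)) / x) := by
      rw [intervalIntegral.integral_const_mul, h1]
    rw [← h2, intervalIntegral.integral_of_le hab]
  rw [setIntegral_congr_fun measurableSet_Ioi step1]
  -- step 2: swap
  have hInt : Integrable (uncurry fun x t => Real.exp (-(c * x)) * Real.sin (t * x))
      ((volume.restrict (Ioi (0:ℝ))).prod (volume.restrict (Ioc a b))) := by
    have hbnd : Integrable (fun z : ℝ × ℝ => Real.exp (-c * z.1) * 1)
        ((volume.restrict (Ioi (0:ℝ))).prod (volume.restrict (Ioc a b))) := by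
      refine Integrable.mul_prod (f := fun x => Real.exp (-c*x)) (g := fun _ : ℝ => (1:ℝ)) (exp_neg_integrableOn_Ioi 0 hc) ?_
      rw [integrable_const_iff]
      right
      infer_instance
    refine Integrable.mono' hbnd ?_ ?_
    · apply Continuous.aestronglyMeasurable
      exact (Real.continuous_exp.comp (continuous_const.mul continuous_fst).neg).mul
        (Real.continuous_sin.comp (continuous_snd.mul continuous_fst))
    · filter_upwards with z
      simp only [uncurry, Real.norm_eq_abs, mul_one, abs_mul, Real.abs_exp, neg_mul]
      exact mul_le_of_le_one_right (Real.exp_pos _).le (Real.abs_sin_le_one _)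
  rw [integral_integral_swap hInt]
  -- step 3: inner integral
  have step3 : ∀ t ∈ Ioc a b,
      (∫ x in Ioi (0:ℝ), Real.exp (-(c * x)) * Real.sin (t * x)) = t / (c^2 + t^2) :=
    fun t _ => integral_exp_sin t hc
  rw [setIntegral_congr_fun measurableSet_Ioc step3]
  -- step 4: compute
  rw [← intervalIntegral.integral_of_le hab]
  have hderiv : ∀ t ∈ uIcc a b, HasDerivAt (fun t : ℝ => Real.log (c^2 + t^2) / 2)
      (t / (c^2 + t^2)) t := by
    intro t _
    have hpos : (0:ℝ) < c^2 + t^2 := by positivity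
    have h1 : HasDerivAt (fun t : ℝ => c^2 + t^2) (2*t) t := by
      simpa using ((hasDerivAt_pow 2 t).const_add (c^2))
    have := (h1.log hpos.ne').div_const 2
    refine this.congr_deriv ?_
    field_simp
  have hint : IntervalIntegrable (fun t : ℝ => t / (c^2 + t^2)) volume a b := by
    apply Continuous.intervalIntegrable
    exact continuous_id.div (by continuity) (fun t => by positivity)
  rw [intervalIntegral.integral_eq_sub_of_hasDerivAt hderiv hint]
  ring


lemma summable_odd_sq : Summable (fun n : ℕ => 1/(2*(n:ℝ)+1)^2) := by
  have h : Summable (fun n : ℕ => 1/((n:ℝ)+1)^2) := by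
    have := Real.summable_one_div_nat_pow.mpr (le_refl 2)
    exact_mod_cast (summable_nat_add_iff 1).mpr this
  refine Summable.of_nonneg_of_le (fun n => by positivity) (fun n => ?_) h
  refine one_div_le_one_div_of_le (by positivity) ?_
  nlinarith [Nat.cast_nonneg (α := ℝ) n]

lemma sinh_prod (t : ℝ) :
    Tendsto (fun n : ℕ => π * t * ∏ j ∈ range n, (1 + t^2/((j:ℝ)+1)^2))
      atTop (𝓝 (Real.sinh (π * t))) := by
  have h := Complex.tendsto_euler_sin_prod (t * Complex.I)
  have him := (Complex.continuous_im.tendsto _).comp h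
  have key : ∀ n : ℕ, ((π : ℂ) * (↑t * Complex.I) *
      ∏ j ∈ range n, ((1:ℂ) - (↑t * Complex.I)^2 / ((j:ℂ)+1)^2)).im
        = π * t * ∏ j ∈ range n, (1 + t^2/((j:ℝ)+1)^2) := by
    intro n
    have hp : (∏ j ∈ range n, ((1:ℂ) - (↑t * Complex.I)^2 / ((j:ℂ)+1)^2))
        = ((∏ j ∈ range n, (1 + t^2/((j:ℝ)+1)^2) : ℝ) : ℂ) := by
      rw [Complex.ofReal_prod]
      refine Finset.prod_congr rfl fun j _ => ?_
      rw [mul_pow, Complex.I_sq]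
      push_cast
      ring
    rw [hp]
    have : (π : ℂ) * (↑t * Complex.I) * ((∏ j ∈ range n, (1 + t^2/((j:ℝ)+1)^2) : ℝ) : ℂ)
        = ((π * t * ∏ j ∈ range n, (1 + t^2/((j:ℝ)+1)^2) : ℝ) : ℂ) * Complex.I := by
      push_cast; ring
    rw [this, Complex.mul_I_im, Complex.ofReal_re]
  have hlim : (Complex.sin (↑π * (↑t * Complex.I))).im = Real.sinh (π * t) := by
    have h1 : (π : ℂ) * (↑t * Complex.I) = ((π * t : ℝ) : ℂ) * Complex.I := by push_cast; ring
    rw [h1, Complex.sin_mul_I, Complex.mul_I_im, ← Complex.ofReal_sinh, Complex.ofReal_re]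
  rw [← hlim]
  refine him.congr fun n => ?_
  exact key n

lemma prod_split (t : ℝ) : ∀ n : ℕ,
    ∏ j ∈ range (2*n), (1 + (2*t)^2/((j:ℝ)+1)^2)
      = (∏ k ∈ range n, (1 + t^2/((k:ℝ)+1)^2)) * ∏ k ∈ range n, (1 + 4*t^2/(2*(k:ℝ)+1)^2) := by
  intro n
  induction n with
  | zero => simp
  | succ n ih =>
    have h2 : 2*(n+1) = (2*n) + 1 + 1 := by ring
    rw [h2, Finset.prod_range_succ, Finset.prod_range_succ, ih,
      Finset.prod_range_succ, Finset.prod_range_succ]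
    have e1 : (1 + (2*t)^2/(((2*n : ℕ):ℝ)+1)^2) = 1 + 4*t^2/(2*(n:ℝ)+1)^2 := by
      push_cast; ring
    have e2 : (1 + (2*t)^2/(((2*n+1 : ℕ):ℝ)+1)^2) = 1 + t^2/((n:ℝ)+1)^2 := by
      push_cast
      have hne : ((n:ℝ)+1) ≠ 0 := by positivity
      field_simp
      ring
    rw [e1, e2]
    ring

lemma cosh_prod (t : ℝ) :
    Tendsto (fun n : ℕ => ∏ k ∈ range n, (1 + 4*t^2/(2*(k:ℝ)+1)^2))
      atTop (𝓝 (Real.cosh (π * t))) := by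
  by_cases ht : t = 0
  · simp [ht]
  have hsinh_ne : Real.sinh (π * t) ≠ 0 := by
    rw [Real.sinh_ne_zero]
    exact mul_ne_zero Real.pi_ne_zero ht
  have hP : ∀ n : ℕ, (0:ℝ) < ∏ k ∈ range n, (1 + t^2/((k:ℝ)+1)^2) :=
    fun n => Finset.prod_pos fun k _ => by positivity
  have hD_ne : ∀ n : ℕ, π * t * ∏ k ∈ range n, (1 + t^2/((k:ℝ)+1)^2) ≠ 0 :=
    fun n => mul_ne_zero (mul_ne_zero Real.pi_ne_zero ht) (hP n).ne'
  have hsub : Tendsto (fun n : ℕ => 2*n) atTop atTop :=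
    tendsto_atTop_mono (fun n => by simp only [id_eq]; omega) tendsto_id
  have hN : Tendsto (fun n : ℕ => π * (2*t) * ∏ j ∈ range (2*n), (1 + (2*t)^2/((j:ℝ)+1)^2))
      atTop (𝓝 (Real.sinh (π * (2*t)))) := (sinh_prod (2*t)).comp hsub
  have hD := sinh_prod t
  have hQ := (hN.div hD hsinh_ne).div_const 2
  have heq : ∀ n : ℕ,
      (π * (2*t) * ∏ j ∈ range (2*n), (1 + (2*t)^2/((j:ℝ)+1)^2))
        / (π * t * ∏ k ∈ range n, (1 + t^2/((k:ℝ)+1)^2)) / 2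
        = ∏ k ∈ range n, (1 + 4*t^2/(2*(k:ℝ)+1)^2) := by
    intro n
    rw [prod_split t n]
    field_simp
  have hlim : Real.sinh (π * (2*t)) / Real.sinh (π * t) / 2 = Real.cosh (π * t) := by
    have : π * (2*t) = 2 * (π * t) := by ring
    rw [this, Real.sinh_two_mul]
    field_simp
  rw [← hlim]
  exact hQ.congr heq

lemma summable_log_cosh (t : ℝ) :
    Summable (fun k : ℕ => Real.log (1 + 4*t^2/(2*(k:ℝ)+1)^2)) := by
  refine Summable.of_nonneg_of_le (fun k => Real.log_nonneg (le_add_of_nonneg_right (by positivity)))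
    (fun k => ?_) (summable_odd_sq.mul_left (4*t^2))
  have h := Real.log_le_sub_one_of_pos (show (0:ℝ) < 1 + 4*t^2/(2*(k:ℝ)+1)^2 by positivity)
  calc Real.log (1 + 4*t^2/(2*(k:ℝ)+1)^2) ≤ 1 + 4*t^2/(2*(k:ℝ)+1)^2 - 1 := h
    _ = 4*t^2 * (1/(2*(k:ℝ)+1)^2) := by ring

lemma hasSum_log_cosh (t : ℝ) :
    HasSum (fun k : ℕ => Real.log (1 + 4*t^2/(2*(k:ℝ)+1)^2)) (Real.log (Real.cosh (π * t))) := by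
  have hs := (summable_log_cosh t).hasSum
  have h1 := hs.tendsto_sum_nat
  have h2 : Tendsto (fun n : ℕ => ∑ k ∈ range n, Real.log (1 + 4*t^2/(2*(k:ℝ)+1)^2))
      atTop (𝓝 (Real.log (Real.cosh (π * t)))) := by
    have hc := ((Real.continuousAt_log (Real.cosh_pos (x := π*t)).ne').tendsto).comp (cosh_prod t)
    refine hc.congr fun n => ?_
    rw [comp_apply, Real.log_prod]
    exact fun k _ => by positivity
  have := tendsto_nhds_unique h1 h2
  rwa [this] at hs


lemma hasSum_exp_odd {y : ℝ} (hy : 0 < y) :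
    HasSum (fun n : ℕ => 2 * Real.exp (-((2*(n:ℝ)+1)*y))) (1 / Real.sinh y) := by
  have hr0 : (0:ℝ) ≤ Real.exp (-(2*y)) := (Real.exp_pos _).le
  have hr1 : Real.exp (-(2*y)) < 1 := by
    rw [Real.exp_lt_one_iff]; linarith
  have hgeo := hasSum_geometric_of_lt_one hr0 hr1
  have h := hgeo.mul_left (2 * Real.exp (-y))
  have hcongr : ∀ n : ℕ, 2 * Real.exp (-((2*(n:ℝ)+1)*y))
      = 2 * Real.exp (-y) * Real.exp (-(2*y)) ^ n := by
    intro n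
    rw [← Real.exp_nat_mul, mul_assoc, ← Real.exp_add]
    congr 1
    push_cast
    ring
  have hval : 2 * Real.exp (-y) * (1 - Real.exp (-(2*y)))⁻¹ = 1 / Real.sinh y := by
    have hAB : Real.exp y * Real.exp (-y) = 1 := by rw [← Real.exp_add]; simp
    have hB2 : Real.exp (-(2*y)) = Real.exp (-y) * Real.exp (-y) := by
      rw [← Real.exp_add]; ring_nf
    have hABs : 1 - Real.exp (-y) * Real.exp (-y)
        = Real.exp (-y) * (Real.exp y - Real.exp (-y)) := by linear_combination -hAB
    have hA_B : (0:ℝ) < Real.exp y - Real.exp (-y) := by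
      have : Real.exp (-y) < Real.exp y := Real.exp_lt_exp.mpr (by linarith)
      linarith
    rw [hB2, Real.sinh_eq, hABs, one_div_div, mul_inv, div_eq_mul_inv,
      show (2:ℝ) * Real.exp (-y) * ((Real.exp (-y))⁻¹ * (Real.exp y - Real.exp (-y))⁻¹)
        = (Real.exp (-y) * (Real.exp (-y))⁻¹) * (2 * (Real.exp y - Real.exp (-y))⁻¹) from by ring,
      mul_inv_cancel₀ (Real.exp_ne_zero (-y)), one_mul]
  rw [← hval]
  exact h.congr_fun hcongr

lemma term_log_eq (t β : ℝ) (hβ : 0 < β) (n : ℕ) :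
    Real.log (((2*(n:ℝ)+1)*β)^2 + t^2)
      = Real.log (((2*(n:ℝ)+1)*β)^2) + Real.log (1 + 4*(t/(2*β))^2/(2*(n:ℝ)+1)^2) := by
  have hc : (0:ℝ) < ((2*(n:ℝ)+1)*β)^2 := by positivity
  have h2 : (0:ℝ) < 1 + 4*(t/(2*β))^2/(2*(n:ℝ)+1)^2 := by positivity
  rw [← Real.log_mul hc.ne' h2.ne']
  congr 1
  have hn : (2*(n:ℝ)+1) ≠ 0 := by positivity
  field_simp
  ring

theorem main_le (a b β : ℝ) (hβ : 0 < β) (hab : a ≤ b) :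
    ∫ x in Set.Ioi (0:ℝ), (Real.cos (a * x) - Real.cos (b * x)) / (x * Real.sinh (β * x)) =
      Real.log (Real.cosh (b * π / (2 * β))) - Real.log (Real.cosh (a * π / (2 * β))) := by
  set c : ℕ → ℝ := fun n => (2*(n:ℝ)+1)*β with hc
  have hcpos : ∀ n, 0 < c n := fun n => by positivity
  set F : ℕ → ℝ → ℝ := fun n x =>
    2 * (Real.exp (-(c n * x)) * ((Real.cos (a*x) - Real.cos (b*x)) / x)) with hFdef
  -- pointwise tsum identity
  have hpt : ∀ x ∈ Ioi (0:ℝ),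
      (Real.cos (a * x) - Real.cos (b * x)) / (x * Real.sinh (β * x)) = ∑' n, F n x := by
    intro x hx
    have hx0 : (0:ℝ) < x := hx
    have hbx : (0:ℝ) < β * x := by positivity
    have hsum := (hasSum_exp_odd hbx).mul_right ((Real.cos (a*x) - Real.cos (b*x)) / x)
    have hsum' : HasSum (fun n => F n x)
        (1 / Real.sinh (β*x) * ((Real.cos (a*x) - Real.cos (b*x)) / x)) := by
      refine hsum.congr_fun fun n => ?_
      simp only [hFdef, hc]
      rw [show (2*(n:ℝ)+1)*β*x = (2*(n:ℝ)+1)*(β*x) by ring]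
      ring
    rw [hsum'.tsum_eq]
    have hs : Real.sinh (β*x) ≠ 0 := (Real.sinh_pos_iff.mpr hbx).ne'
    field_simp
  rw [setIntegral_congr_fun measurableSet_Ioi hpt]
  -- integrability of each term
  have hmeas : ∀ n, AEStronglyMeasurable (F n) (volume.restrict (Ioi 0)) := by
    intro n
    apply Measurable.aestronglyMeasurable
    apply Measurable.const_mul
    exact ((Real.measurable_exp.comp (measurable_const.mul measurable_id).neg).mul
      (((Real.measurable_cos.comp (measurable_const.mul measurable_id)).sub
        (Real.measurable_cos.comp (measurable_const.mul measurable_id))).div measurable_id))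
  have hbound : ∀ n, ∀ x ∈ Ioi (0:ℝ),
      ‖F n x‖ ≤ (a^2+b^2) * (x * Real.exp (-(c n * x))) := by
    intro n x hx
    have hx0 : (0:ℝ) < x := hx
    have h1 := cos_diff_div_le a b x hx0
    rw [hFdef]
    simp only [Real.norm_eq_abs, abs_mul, Real.abs_exp, abs_two]
    calc 2 * (Real.exp (-(c n * x)) * |(Real.cos (a*x) - Real.cos (b*x)) / x|)
        ≤ 2 * (Real.exp (-(c n * x)) * ((a^2+b^2)/2 * x)) := by
          refine mul_le_mul_of_nonneg_left (mul_le_mul_of_nonneg_left h1 (Real.exp_pos _).le)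
            (by norm_num)
      _ = (a^2+b^2) * (x * Real.exp (-(c n * x))) := by ring
  have hBint : ∀ n, IntegrableOn (fun x => (a^2+b^2) * (x * Real.exp (-(c n * x)))) (Ioi 0) :=
    fun n => (integrableOn_mul_exp (hcpos n)).const_mul _
  have hF_int : ∀ n, Integrable (F n) (volume.restrict (Ioi 0)) := by
    intro n
    refine Integrable.mono' (hBint n) (hmeas n) ?_
    filter_upwards [ae_restrict_mem measurableSet_Ioi] with x hx
    exact hbound n x hx
  -- summability of integrals of norms
  have hInorm : ∀ n, (∫ x in Ioi (0:ℝ), ‖F n x‖) ≤ (a^2+b^2) * (1 / (c n)^2) := by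
    intro n
    have h1 : (∫ x in Ioi (0:ℝ), ‖F n x‖)
        ≤ ∫ x in Ioi (0:ℝ), (a^2+b^2) * (x * Real.exp (-(c n * x))) := by
      refine setIntegral_mono_on (hF_int n).norm (hBint n) measurableSet_Ioi ?_
      exact fun x hx => hbound n x hx
    rw [MeasureTheory.integral_const_mul, integral_mul_exp (hcpos n)] at h1
    exact h1
  have hF_sum : Summable (fun n => ∫ x in Ioi (0:ℝ), ‖F n x‖) := by
    have hmaj : Summable (fun n : ℕ => (a^2+b^2)/β^2 * (1/(2*(n:ℝ)+1)^2)) :=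
      summable_odd_sq.mul_left _
    refine Summable.of_nonneg_of_le
      (fun n => integral_nonneg fun x => norm_nonneg _) (fun n => ?_) hmaj
    refine le_trans (hInorm n) (le_of_eq ?_)
    simp only [hc, mul_pow]
    rw [one_div, mul_inv, ← one_div, ← one_div]
    ring
  rw [← integral_tsum_of_summable_integral_norm hF_int hF_sum]
  -- each integral via frullani
  have hterm : ∀ n : ℕ, (∫ x in Ioi (0:ℝ), F n x)
      = Real.log ((c n)^2 + b^2) - Real.log ((c n)^2 + a^2) := by
    intro n
    rw [hFdef]
    simp only
    rw [MeasureTheory.integral_const_mul, frullani_cos a b (hcpos n) hab]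
    ring
  rw [tsum_congr hterm]
  -- evaluate the sum of logs
  have hb' := hasSum_log_cosh (b/(2*β))
  have ha' := hasSum_log_cosh (a/(2*β))
  have hsub := hb'.sub ha'
  have hsub' : HasSum (fun n : ℕ => Real.log ((c n)^2 + b^2) - Real.log ((c n)^2 + a^2))
      (Real.log (Real.cosh (π * (b/(2*β)))) - Real.log (Real.cosh (π * (a/(2*β))))) := by
    refine hsub.congr_fun fun n => ?_
    rw [hc]
    simp only
    rw [term_log_eq b β hβ n, term_log_eq a β hβ n]
    ring
  rw [hsub'.tsum_eq]
  congr 2 <;> ring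

theorem stmt_10 (a b β : ℝ) (hβ : 0 < β) :
    ∫ x in Set.Ioi (0:ℝ), (Real.cos (a * x) - Real.cos (b * x)) / (x * Real.sinh (β * x)) =
      Real.log (Real.cosh (b * π / (2 * β))) - Real.log (Real.cosh (a * π / (2 * β))) := by
  rcases le_total a b with hab | hba
  · exact main_le a b β hβ hab
  · have h := main_le b a β hβ hba
    have hneg : ∫ x in Set.Ioi (0:ℝ),
        (Real.cos (a * x) - Real.cos (b * x)) / (x * Real.sinh (β * x))
        = - ∫ x in Set.Ioi (0:ℝ),
            (Real.cos (b * x) - Real.cos (a * x)) / (x * Real.sinh (β * x)) := by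
      rw [← integral_neg]
      congr 1
      funext x
      ring
    rw [hneg, h]
    ring
end

section
/- For real a and real β with |β| < 1, ∫₀^∞ sin²(a x) · cosh(β x)/(x · sinh(x)) dx = (1/4)·ln( (cosh(2aπ) + cos(βπ)) / (1 + cos(βπ)) ). -/
open Real MeasureTheory Set Filter

lemma exp_sin_integrable {c : ℝ} (hc : 0 < c) (b : ℝ) :
    IntegrableOn (fun x => Real.exp (-(c*x)) * Real.sin (b*x)) (Ioi (0:ℝ)) := by
  have h := exp_neg_integrableOn_Ioi 0 hc
  refine h.mono' ?_ ?_
  · exact (Continuous.mul (by continuity) (by continuity)).aestronglyMeasurable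
  · filter_upwards with x
    rw [Real.norm_eq_abs, abs_mul, neg_mul]
    calc |Real.exp (-(c*x))| * |Real.sin (b*x)| ≤ |Real.exp (-(c*x))| * 1 := by
          gcongr; exact abs_sin_le_one _
      _ = Real.exp (-(c*x)) := by rw [mul_one, abs_of_pos (Real.exp_pos _)]

lemma laplace_sin {c : ℝ} (hc : 0 < c) (b : ℝ) :
    ∫ x in Ioi (0:ℝ), Real.exp (-(c*x)) * Real.sin (b*x) = b / (c^2 + b^2) := by
  have hden : (0:ℝ) < c^2 + b^2 := by positivity
  set G : ℝ → ℝ := fun x => -(Real.exp (-(c*x)) * (c * Real.sin (b*x) + b * Real.cos (b*x))) / (c^2+b^2) with hG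
  have hderiv : ∀ x ∈ Ici (0:ℝ), HasDerivAt G (Real.exp (-(c*x)) * Real.sin (b*x)) x := by
    intro x _
    have he : HasDerivAt (fun x => Real.exp (-(c*x))) (-c * Real.exp (-(c*x))) x := by
      simpa [mul_comm] using (((hasDerivAt_id x).const_mul c).neg.exp)
    have hs : HasDerivAt (fun x => Real.sin (b*x)) (b * Real.cos (b*x)) x := by
      simpa [mul_comm] using ((hasDerivAt_id x).const_mul b).sin
    have hcs : HasDerivAt (fun x => Real.cos (b*x)) (-(b * Real.sin (b*x))) x := by
      simpa [mul_comm] using ((hasDerivAt_id x).const_mul b).cos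
    have := ((he.mul ((hs.const_mul c).add (hcs.const_mul b))).neg.div_const (c^2+b^2))
    refine this.congr_deriv (Eq.symm ?_)
    simp only [Pi.add_apply]
    field_simp
    ring
  have hlim : Filter.Tendsto G Filter.atTop (nhds 0) := by
    have hb : Filter.Tendsto (fun x : ℝ => Real.exp (-(c*x)) * ((|c| + |b|) / (c^2+b^2)))
        Filter.atTop (nhds 0) := by
      have : Filter.Tendsto (fun x : ℝ => Real.exp (-(c*x))) Filter.atTop (nhds 0) := by
        have h1 : Filter.Tendsto (fun x : ℝ => c * x) Filter.atTop Filter.atTop :=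
          Filter.Tendsto.const_mul_atTop hc Filter.tendsto_id
        exact Real.tendsto_exp_neg_atTop_nhds_zero.comp h1
      simpa using this.mul_const _
    refine squeeze_zero_norm (fun x => ?_) hb
    rw [hG]
    simp only [norm_div, norm_neg, norm_mul, Real.norm_eq_abs, abs_of_pos hden]
    rw [div_eq_mul_inv, abs_of_pos (Real.exp_pos _)]
    rw [div_eq_mul_inv, ← mul_assoc]
    gcongr
    calc |c * Real.sin (b*x) + b * Real.cos (b*x)| ≤ |c * Real.sin (b*x)| + |b * Real.cos (b*x)| := abs_add_le _ _
      _ ≤ |c| * 1 + |b| * 1 := by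
          rw [abs_mul, abs_mul]; gcongr
          exacts [abs_sin_le_one _, abs_cos_le_one _]
      _ = |c| + |b| := by ring
  have := integral_Ioi_of_hasDerivAt_of_tendsto' hderiv (exp_sin_integrable hc b) hlim
  rw [this, hG]
  simp
  ring


lemma sin_sq_exp_integrable {c : ℝ} (hc : 0 < c) (b : ℝ) :
    IntegrableOn (fun x => Real.sin (b*x)^2 * Real.exp (-(c*x)) / x) (Ioi (0:ℝ)) := by
  have h := (exp_neg_integrableOn_Ioi 0 hc).const_mul |b|
  simp only [neg_mul] at h
  refine h.mono' ?_ ?_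
  · apply ContinuousOn.aestronglyMeasurable ?_ measurableSet_Ioi
    apply ContinuousOn.div ((Continuous.mul (by continuity) (by continuity)).continuousOn)
      continuousOn_id
    intro x hx; exact ne_of_gt hx
  · rw [ae_restrict_iff' measurableSet_Ioi]
    filter_upwards with x hx
    rw [mem_Ioi] at hx
    rw [Real.norm_eq_abs, abs_div, abs_mul, abs_pow, abs_of_pos hx,
      abs_of_pos (Real.exp_pos _), div_le_iff₀ hx]
    have h1 : |Real.sin (b*x)| ≤ 1 := abs_sin_le_one _
    have h2 : |Real.sin (b*x)| ≤ |b| * x := by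
      calc |Real.sin (b*x)| ≤ |b*x| := Real.abs_sin_le_abs
        _ = |b| * x := by rw [abs_mul, abs_of_pos hx]
    have h3 : (0:ℝ) ≤ |Real.sin (b*x)| := abs_nonneg _
    have he : (0:ℝ) < Real.exp (-(c*x)) := Real.exp_pos _
    nlinarith [mul_le_mul h2 h1 h3 (by positivity : (0:ℝ) ≤ |b| * x)]

lemma log_integral {c : ℝ} (hc : 0 < c) (b : ℝ) :
    ∫ x in Ioi (0:ℝ), Real.sin (b*x)^2 * Real.exp (-(c*x)) / x
      = (1/4) * Real.log (1 + 4*b^2/c^2) := by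
  set Φ : ℝ → ℝ := fun b => ∫ x in Ioi (0:ℝ), Real.sin (b*x)^2 * Real.exp (-(c*x)) / x with hΦdef
  set ψ : ℝ → ℝ := fun b => (1/4) * Real.log (1 + 4*b^2/c^2) with hψdef
  have hupos : ∀ b : ℝ, (0:ℝ) < 1 + 4*b^2/c^2 := fun b => by positivity
  have hΦ : ∀ b₀ : ℝ, HasDerivAt Φ (2*b₀ / (c^2 + 4*b₀^2)) b₀ := by
    intro b₀
    have key := hasDerivAt_integral_of_dominated_loc_of_deriv_le (μ := volume.restrict (Ioi 0))
      (F := fun b x => Real.sin (b*x)^2 * Real.exp (-(c*x)) / x)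
      (F' := fun b x => Real.sin (2*b*x) * Real.exp (-(c*x)))
      (x₀ := b₀) (bound := fun x => Real.exp (-(c*x))) (Metric.ball_mem_nhds b₀ one_pos)
      ?_ ?_ ?_ ?_ ?_ ?_
    · have e1 : (∫ x in Ioi (0:ℝ), Real.sin (2*b₀*x) * Real.exp (-(c*x)))
          = 2*b₀ / (c^2 + 4*b₀^2) := by
        have := laplace_sin hc (2*b₀)
        rw [show (2*b₀)/(c^2+(2*b₀)^2) = 2*b₀/(c^2+4*b₀^2) by ring_nf] at this
        rw [← this]
        apply setIntegral_congr_fun measurableSet_Ioi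
        intro x _
        simp [mul_comm, mul_assoc]
      rw [← e1]
      exact key.2
    · filter_upwards with b
      apply ContinuousOn.aestronglyMeasurable ?_ measurableSet_Ioi
      apply ContinuousOn.div ((Continuous.mul (by continuity) (by continuity)).continuousOn)
        continuousOn_id
      intro x hx; exact ne_of_gt hx
    · exact sin_sq_exp_integrable hc b₀
    · exact ((Continuous.mul (by continuity) (by continuity)).aestronglyMeasurable)
    · rw [ae_restrict_iff' measurableSet_Ioi]
      filter_upwards with x hx
      intro b _
      rw [Real.norm_eq_abs, abs_mul, abs_of_pos (Real.exp_pos _)]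
      calc |Real.sin (2*b*x)| * Real.exp (-(c*x)) ≤ 1 * Real.exp (-(c*x)) := by
            gcongr; exact abs_sin_le_one _
        _ = Real.exp (-(c*x)) := one_mul _
    · simpa only [neg_mul, IntegrableOn] using exp_neg_integrableOn_Ioi 0 hc
    · rw [ae_restrict_iff' measurableSet_Ioi]
      filter_upwards with x hx
      intro b _
      rw [mem_Ioi] at hx
      have h1 : HasDerivAt (fun b : ℝ => Real.sin (b*x)) (Real.cos (b*x) * x) b :=
        (hasDerivAt_mul_const x).sin
      have h2 : HasDerivAt (fun b : ℝ => Real.sin (b*x)^2)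
          (2 * Real.sin (b*x) * (Real.cos (b*x) * x)) b := by
        simpa using h1.fun_pow 2
      have h3 := (h2.mul_const (Real.exp (-(c*x)))).div_const x
      refine h3.congr_deriv (Eq.symm ?_)
      rw [mul_assoc, Real.sin_two_mul]
      field_simp
  have hψ : ∀ b₀ : ℝ, HasDerivAt ψ (2*b₀ / (c^2 + 4*b₀^2)) b₀ := by
    intro b₀
    have hu : HasDerivAt (fun b : ℝ => 1 + 4*b^2/c^2) (8*b₀/c^2) b₀ := by
      have : HasDerivAt (fun b : ℝ => b^2) (2*b₀) b₀ := by simpa using hasDerivAt_pow 2 b₀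
      have := ((this.const_mul 4).div_const (c^2)).const_add 1
      refine this.congr_deriv (Eq.symm ?_); ring
    have := (hu.log (ne_of_gt (hupos b₀))).const_mul (1/4)
    refine this.congr_deriv (Eq.symm ?_)
    have hc2 : c^2 ≠ 0 := by positivity
    field_simp
    ring
  have hconst : ∀ b : ℝ, Φ b - ψ b = Φ 0 - ψ 0 := by
    intro b
    apply is_const_of_deriv_eq_zero (f := fun b => Φ b - ψ b)
    · intro y; exact ((hΦ y).sub (hψ y)).differentiableAt
    · intro y
      rw [HasDerivAt.deriv (f := fun b => Φ b - ψ b) ((hΦ y).sub (hψ y))]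
      ring
  have h0 : Φ 0 = 0 := by
    rw [hΦdef]
    simp
  have h0' : ψ 0 = 0 := by rw [hψdef]; norm_num
  have := hconst b
  rw [h0, h0'] at this
  have : Φ b = ψ b := by linarith
  exact this


lemma series_cosh_sinh {β : ℝ} (x : ℝ) (hx : 0 < x) :
    HasSum (fun n : ℕ => Real.exp (-((2*n+1-β)*x)) + Real.exp (-((2*n+1+β)*x)))
      (Real.cosh (β*x) / Real.sinh x) := by
  have hr0 : (0:ℝ) ≤ Real.exp (-(2*x)) := (Real.exp_pos _).le
  have hr1 : Real.exp (-(2*x)) < 1 := by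
    rw [Real.exp_lt_one_iff]; linarith
  have hgeo := hasSum_geometric_of_lt_one hr0 hr1
  set C : ℝ := Real.exp (-x) * (Real.exp (β*x) + Real.exp (-(β*x))) with hC
  have hmul := hgeo.mul_left C
  have hterm : ∀ n : ℕ, C * Real.exp (-(2*x)) ^ n
      = Real.exp (-((2*n+1-β)*x)) + Real.exp (-((2*n+1+β)*x)) := by
    intro n
    rw [← Real.exp_nat_mul, hC]
    simp only [add_mul, mul_add, mul_assoc, ← Real.exp_add, one_mul, mul_one]
    congr 1 <;> · congr 1; push_cast; ring
  have hsum : C * (1 - Real.exp (-(2*x)))⁻¹ = Real.cosh (β*x) / Real.sinh x := by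
    have hs : Real.sinh x > 0 := Real.sinh_pos_iff.mpr hx
    rw [hC, Real.cosh_eq, Real.sinh_eq]
    have h1 : (1 - Real.exp (-(2*x))) ≠ 0 := by nlinarith
    have h2 : Real.exp (-(2*x)) = Real.exp (-x) * Real.exp (-x) := by
      rw [← Real.exp_add]; ring_nf
    have h3 : Real.exp (-x) = (Real.exp x)⁻¹ := Real.exp_neg x
    have hex : Real.exp x ≠ 0 := Real.exp_ne_zero x
    have hsne : Real.exp x - Real.exp (-x) ≠ 0 := by
      rw [Real.sinh_eq] at hs; intro h; rw [h] at hs; simp at hs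
    have h4 : Real.exp (-x) * Real.exp x = 1 := by rw [← Real.exp_add]; simp
    rw [div_div_div_cancel_right₀]
    rw [mul_comm, inv_mul_eq_div, div_eq_div_iff h1 hsne, h2]
    linear_combination (Real.exp (β*x) + Real.exp (-(β*x))) * h4
    norm_num
  rw [← hsum]
  exact (funext hterm ▸ hmul)


lemma prod_range_two_mul {M : Type*} [CommMonoid M] (f : ℕ → M) (N : ℕ) :
    ∏ j ∈ Finset.range (2*N), f j = ∏ k ∈ Finset.range N, (f (2*k) * f (2*k+1)) := by
  induction N with
  | zero => simp
  | succ n ih =>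
      rw [Nat.mul_succ, Finset.prod_range_succ, Finset.prod_range_succ, Finset.prod_range_succ,
        ← ih, ← mul_assoc]

lemma cos_prod_odd (z : ℂ) (hz : Complex.sin (↑π * z / 2) ≠ 0)
    (hz2 : ∀ k : ℕ, ((1:ℂ) - z^2/(2*(k:ℂ)+2)^2) ≠ 0) :
    Tendsto (fun N : ℕ => ∏ k ∈ Finset.range N, ((1:ℂ) - z^2/(2*(k:ℂ)+1)^2)) atTop
      (nhds (Complex.cos (↑π * z / 2))) := by
  have hz0 : z ≠ 0 := by
    intro h; apply hz; simp [h]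
  have hS := Complex.tendsto_euler_sin_prod z
  have hS2 : Tendsto (fun N : ℕ => ↑π * z * ∏ j ∈ Finset.range (2*N),
      ((1:ℂ) - z^2/((j:ℂ)+1)^2)) atTop (nhds (Complex.sin (↑π * z))) := by
    have h2 : Tendsto (fun N : ℕ => 2*N) atTop atTop :=
      tendsto_atTop_mono (fun n : ℕ => by omega : ∀ n : ℕ, n ≤ 2*n) tendsto_id
    exact hS.comp h2
  have hT := Complex.tendsto_euler_sin_prod (z/2)
  have hTeq : ∀ N : ℕ, ↑π * (z/2) * ∏ j ∈ Finset.range N, ((1:ℂ) - (z/2)^2/((j:ℂ)+1)^2)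
      = ↑π * (z/2) * ∏ j ∈ Finset.range N, ((1:ℂ) - z^2/(2*(j:ℂ)+2)^2) := by
    intro N
    congr 1
    apply Finset.prod_congr rfl
    intro j _
    congr 1
    have hj1 : ((j:ℂ)+1) ≠ 0 := Nat.cast_add_one_ne_zero j
    have hj2 : (2*(j:ℂ)+2) ≠ 0 := by
      intro h
      exact hj1 (by linear_combination h / 2)
    field_simp
  simp only [hTeq] at hT
  have hDne : ∀ N : ℕ, (∏ j ∈ Finset.range N, ((1:ℂ) - z^2/(2*(j:ℂ)+2)^2)) ≠ 0 :=
    fun N => Finset.prod_ne_zero_iff.mpr (fun k _ => hz2 k)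
  have hTne : ∀ N : ℕ, (↑π * (z/2) * ∏ j ∈ Finset.range N, ((1:ℂ) - z^2/(2*(j:ℂ)+2)^2)) ≠ 0 := by
    intro N
    apply mul_ne_zero (mul_ne_zero _ _) (hDne N)
    · exact_mod_cast Real.pi_ne_zero
    · exact div_ne_zero hz0 two_ne_zero
  have hkey : ∀ N : ℕ, (∏ k ∈ Finset.range N, ((1:ℂ) - z^2/(2*(k:ℂ)+1)^2))
      = (↑π * z * ∏ j ∈ Finset.range (2*N), ((1:ℂ) - z^2/((j:ℂ)+1)^2))
        / (2 * (↑π * (z/2) * ∏ j ∈ Finset.range N, ((1:ℂ) - z^2/(2*(j:ℂ)+2)^2))) := by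
    intro N
    rw [prod_range_two_mul (fun j => (1:ℂ) - z^2/((j:ℂ)+1)^2) N, Finset.prod_mul_distrib]
    have e1 : (∏ k ∈ Finset.range N, ((1:ℂ) - z^2/(((2*k : ℕ):ℂ)+1)^2))
        = ∏ k ∈ Finset.range N, ((1:ℂ) - z^2/(2*(k:ℂ)+1)^2) := by
      apply Finset.prod_congr rfl; intro k _; push_cast; ring_nf
    have e2 : (∏ k ∈ Finset.range N, ((1:ℂ) - z^2/(((2*k+1 : ℕ):ℂ)+1)^2))
        = ∏ k ∈ Finset.range N, ((1:ℂ) - z^2/(2*(k:ℂ)+2)^2) := by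
      apply Finset.prod_congr rfl; intro k _; push_cast; ring_nf
    rw [e1, e2, eq_div_iff (mul_ne_zero two_ne_zero (hTne N))]
    ring
  have hsinne : Complex.sin (↑π * (z/2)) ≠ 0 := by
    rwa [show (↑π * (z/2) : ℂ) = ↑π * z / 2 by ring]
  have hlim := hS2.div (hT.const_mul 2) (mul_ne_zero two_ne_zero hsinne)
  have hval : Complex.sin (↑π * z) / (2 * Complex.sin (↑π * (z/2)))
      = Complex.cos (↑π * z / 2) := by
    have hd : Complex.sin (↑π * z) = 2 * Complex.sin (↑π * z / 2) * Complex.cos (↑π * z / 2) := by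
      rw [← Complex.sin_two_mul]
      ring_nf
    rw [hd, show (↑π * (z/2) : ℂ) = ↑π * z / 2 by ring]
    field_simp
  rw [← hval]
  exact hlim.congr (fun N => (hkey N).symm)


lemma factor_id (β t m : ℝ) (h1 : m - β ≠ 0) (h2 : m + β ≠ 0) (hm : m ≠ 0) :
    ((((1 + t^2/(m-β)^2) * (1 + t^2/(m+β)^2)) : ℝ) : ℂ) * ((1:ℂ) - (β:ℂ)^2/(m:ℂ)^2)^2
      = (1 - ((β:ℂ)+(t:ℂ)*Complex.I)^2/(m:ℂ)^2) * (1 - ((β:ℂ)-(t:ℂ)*Complex.I)^2/(m:ℂ)^2) := by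
  have hs1 : ((β:ℂ)+(t:ℂ)*Complex.I)^2 + ((β:ℂ)-(t:ℂ)*Complex.I)^2 = ((2*(β^2-t^2) : ℝ) : ℂ) := by
    push_cast
    linear_combination (2*(t:ℂ)^2) * Complex.I_sq
  have hs2 : ((β:ℂ)+(t:ℂ)*Complex.I)^2 * ((β:ℂ)-(t:ℂ)*Complex.I)^2 = (((β^2+t^2)^2 : ℝ) : ℂ) := by
    push_cast
    linear_combination ((-2*(β:ℂ)^2*(t:ℂ)^2) + (t:ℂ)^4*(Complex.I^2 - 1)) * Complex.I_sq
  have hmc : ((m:ℝ):ℂ) ≠ 0 := by rwa [ne_eq, Complex.ofReal_eq_zero]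
  have key : (1 - ((β:ℂ)+(t:ℂ)*Complex.I)^2/(m:ℂ)^2) * (1 - ((β:ℂ)-(t:ℂ)*Complex.I)^2/(m:ℂ)^2)
      = 1 - (((β:ℂ)+(t:ℂ)*Complex.I)^2 + ((β:ℂ)-(t:ℂ)*Complex.I)^2)/(m:ℂ)^2
        + (((β:ℂ)+(t:ℂ)*Complex.I)^2 * ((β:ℂ)-(t:ℂ)*Complex.I)^2)/((m:ℂ)^2)^2 := by
    field_simp
    ring
  rw [key, hs1, hs2]
  have hreal : (1 + t^2/(m-β)^2) * (1 + t^2/(m+β)^2) * (1 - β^2/m^2)^2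
      = 1 - 2*(β^2-t^2)/m^2 + (β^2+t^2)^2/(m^2)^2 := by
    field_simp
    ring
  calc ((((1 + t^2/(m-β)^2) * (1 + t^2/(m+β)^2)) : ℝ) : ℂ) * ((1:ℂ) - (β:ℂ)^2/(m:ℂ)^2)^2
      = ((((1 + t^2/(m-β)^2) * (1 + t^2/(m+β)^2) * (1 - β^2/m^2)^2) : ℝ) : ℂ) := by
        push_cast; ring
    _ = (((1 - 2*(β^2-t^2)/m^2 + (β^2+t^2)^2/(m^2)^2) : ℝ) : ℂ) := by rw [hreal]
    _ = 1 - ((2*(β^2-t^2) : ℝ) : ℂ)/(m:ℂ)^2 + (((β^2+t^2)^2 : ℝ):ℂ)/((m:ℂ)^2)^2 := by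
        push_cast; ring

-- main product lemma
lemma prod_limit {β : ℝ} (hβ : |β| < 1) {t : ℝ} (ht : t ≠ 0) :
    Tendsto (fun N : ℕ => ∏ n ∈ Finset.range N,
      ((1 + t^2/(2*(n:ℝ)+1-β)^2) * (1 + t^2/(2*(n:ℝ)+1+β)^2))) atTop
      (nhds ((Real.cosh (π*t) + Real.cos (π*β)) / (1 + Real.cos (π*β)))) := by
  have hβ1 : -1 < β := neg_lt_of_abs_lt hβ
  have hβ2 : β < 1 := lt_of_abs_lt hβ
  set w : ℂ := (β : ℂ) + (t:ℂ)*Complex.I with hw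
  set w' : ℂ := (β : ℂ) - (t:ℂ)*Complex.I with hw'
  have himw : w.im = t := by simp [hw]
  have himw' : w'.im = -t := by simp [hw']
  have hrew : w.re = β := by simp [hw]
  have hrew' : w'.re = β := by simp [hw']
  -- nonreal ⇒ sin ≠ 0 and factors ≠ 0
  have hsin : ∀ z : ℂ, z.im ≠ 0 → Complex.sin (↑π * z / 2) ≠ 0 := by
    intro z hzim h
    rw [Complex.sin_eq_zero_iff] at h
    obtain ⟨k, hk⟩ := h
    apply hzim
    have hπ : (↑π : ℂ) ≠ 0 := by exact_mod_cast Real.pi_ne_zero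
    have : z = 2*k := by
      field_simp at hk
      rw [mul_comm] at hk
      linear_combination hk
    rw [this]
    simp
  have hfac : ∀ (z : ℂ), z.im ≠ 0 → ∀ k : ℕ, ((1:ℂ) - z^2/(2*(k:ℂ)+2)^2) ≠ 0 := by
    intro z hzim k h
    have hm : ((2*(k:ℂ)+2)) ≠ 0 := by
      intro hc
      have h2 := congrArg Complex.re hc
      simp at h2
      nlinarith [Nat.cast_nonneg (α := ℝ) k]
    have h2 : z^2 = (2*(k:ℂ)+2)^2 := by
      have h3 := sub_eq_zero.mp h
      field_simp at h3
      linear_combination -h3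
    rcases sq_eq_sq_iff_eq_or_eq_neg.mp h2 with h4 | h4 <;>
    · apply hzim
      rw [h4]
      simp
  have h1 := cos_prod_odd w (hsin w (by rw [himw]; exact ht)) (hfac w (by rw [himw]; exact ht))
  have h2 := cos_prod_odd w' (hsin w' (by rw [himw']; simpa using ht))
    (hfac w' (by rw [himw']; simpa using ht))
  -- limit for real β
  have hβfacR : ∀ (m : ℝ), 1 ≤ m → (1 - β^2/m^2) > 0 := by
    intro m hm
    have : β^2 < 1 := by nlinarith
    have hm2 : (1:ℝ) ≤ m^2 := by nlinarith
    have : β^2/m^2 < 1 := by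
      rw [div_lt_one (by nlinarith)]
      nlinarith
    linarith
  have h3 : Tendsto (fun N : ℕ => ∏ k ∈ Finset.range N, ((1:ℂ) - (β:ℂ)^2/(2*(k:ℂ)+1)^2)) atTop
      (nhds (Complex.cos (↑π * (β:ℂ) / 2))) := by
    by_cases hβ0 : β = 0
    · subst hβ0
      simpa using tendsto_const_nhds
    · apply cos_prod_odd
      · rw [show (↑π * (β:ℂ) / 2 : ℂ) = ((π * β / 2 : ℝ) : ℂ) by push_cast; ring,
          ← Complex.ofReal_sin, Ne, Complex.ofReal_eq_zero]
        intro hsin0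
        rcases Real.sin_eq_zero_iff.mp hsin0 with ⟨n, hn⟩
        have hb : (n:ℝ) * π = π * β / 2 := hn
        have hπ : (0:ℝ) < π := Real.pi_pos
        have : (n:ℝ) * 2 = β := by
          field_simp at hb
          nlinarith [hb]
        rcases Int.lt_or_lt_of_ne (fun h : n = 0 => hβ0 (by rw [← this, h]; simp)) with hn1 | hn1
        · have hn2 : n ≤ -1 := by omega
          have : (n:ℝ) ≤ -1 := by exact_mod_cast hn2
          nlinarith
        · have : (1:ℝ) ≤ (n:ℝ) := by exact_mod_cast hn1
          nlinarith
      · intro k h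
        have h4 := sub_eq_zero.mp h
        have hm : ((2*(k:ℂ)+2)) ≠ 0 := by
          intro hc
          have h2 := congrArg Complex.re hc
          simp at h2
          nlinarith [Nat.cast_nonneg (α := ℝ) k]
        field_simp at h4
        have h5 : ((β^2 : ℝ) : ℂ) = (((2*(k:ℝ)+2)^2 : ℝ) : ℂ) := by push_cast; linear_combination -h4
        rw [Complex.ofReal_inj] at h5
        have : (0:ℝ) ≤ (k:ℝ) := Nat.cast_nonneg k
        nlinarith
  -- symmetric function identities
  have hs1 : w^2 + w'^2 = ((2*(β^2-t^2) : ℝ) : ℂ) := by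
    rw [hw, hw']
    push_cast
    linear_combination (2*(t:ℂ)^2) * Complex.I_sq
  have hs2 : w^2 * w'^2 = (((β^2+t^2)^2 : ℝ) : ℂ) := by
    rw [hw, hw']
    push_cast
    linear_combination ((-2*(β:ℂ)^2*(t:ℂ)^2) + (t:ℂ)^4*(Complex.I^2 - 1)) * Complex.I_sq
  -- product identity
  have hβprodpos : ∀ k : ℕ, (0:ℝ) < 1 - β^2/(2*(k:ℝ)+1)^2 := by
    intro k
    have h0 : (0:ℝ) ≤ (k:ℝ) := Nat.cast_nonneg k
    have : (1:ℝ) ≤ 2*(k:ℝ)+1 := by linarith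
    have := hβfacR (2*(k:ℝ)+1) this
    linarith
  have hCβcast : ∀ N : ℕ, (∏ k ∈ Finset.range N, ((1:ℂ) - (β:ℂ)^2/(2*(k:ℂ)+1)^2))
      = (((∏ k ∈ Finset.range N, (1 - β^2/(2*(k:ℝ)+1)^2)) : ℝ) : ℂ) := by
    intro N
    rw [Complex.ofReal_prod]
    apply Finset.prod_congr rfl
    intro k _
    push_cast
    ring
  have hCβne : ∀ N : ℕ, (∏ k ∈ Finset.range N, ((1:ℂ) - (β:ℂ)^2/(2*(k:ℂ)+1)^2)) ≠ 0 := by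
    intro N
    rw [hCβcast, Complex.ofReal_ne_zero]
    exact ne_of_gt (Finset.prod_pos (fun k _ => hβprodpos k))
  have hPN : ∀ N : ℕ, (((∏ n ∈ Finset.range N,
        ((1 + t^2/(2*(n:ℝ)+1-β)^2) * (1 + t^2/(2*(n:ℝ)+1+β)^2))) : ℝ) : ℂ)
      = (∏ k ∈ Finset.range N, ((1:ℂ) - w^2/(2*(k:ℂ)+1)^2))
        * (∏ k ∈ Finset.range N, ((1:ℂ) - w'^2/(2*(k:ℂ)+1)^2))
        / (∏ k ∈ Finset.range N, ((1:ℂ) - (β:ℂ)^2/(2*(k:ℂ)+1)^2))^2 := by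
    intro N
    rw [eq_div_iff (pow_ne_zero 2 (hCβne N)), ← Finset.prod_pow, Complex.ofReal_prod,
      ← Finset.prod_mul_distrib, ← Finset.prod_mul_distrib]
    apply Finset.prod_congr rfl
    intro n _
    have h0 : (0:ℝ) ≤ (n:ℝ) := Nat.cast_nonneg n
    have hm1 : (2*(n:ℝ)+1-β) ≠ 0 := by nlinarith
    have hm2 : (2*(n:ℝ)+1+β) ≠ 0 := by nlinarith
    have hm : (2*(n:ℝ)+1) ≠ 0 := by nlinarith
    have hfid := factor_id β t (2*(n:ℝ)+1) (by linarith [hm1]) hm2 hm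
    rw [hw, hw']
    push_cast at hfid ⊢
    convert hfid using 3
  -- combine limits
  have hcosβ : Real.cos (π*β/2) > 0 := by
    apply Real.cos_pos_of_mem_Ioo
    constructor
    · nlinarith [Real.pi_pos]
    · nlinarith [Real.pi_pos]
  have hcosβc : Complex.cos (↑π * (β:ℂ) / 2) = ((Real.cos (π*β/2) : ℝ) : ℂ) := by
    rw [Complex.ofReal_cos]
    congr 1
    push_cast
    ring
  have hden_ne : Complex.cos (↑π * (β:ℂ) / 2)^2 ≠ 0 := by
    rw [hcosβc]
    rw [← Complex.ofReal_pow, Complex.ofReal_ne_zero]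
    positivity
  have hcomb := ((h1.mul h2).div ((h3.pow 2)) hden_ne)
  have hval : Complex.cos (↑π * w / 2) * Complex.cos (↑π * w' / 2)
      / Complex.cos (↑π * (β:ℂ) / 2)^2
      = (((Real.cosh (π*t) + Real.cos (π*β)) / (1 + Real.cos (π*β)) : ℝ) : ℂ) := by
    have hA : (↑π*w/2 + ↑π*w'/2 : ℂ) = ((π*β : ℝ):ℂ) := by
      rw [hw, hw']; push_cast; ring
    have hB : (↑π*w/2 - ↑π*w'/2 : ℂ) = ((π*t :ℝ):ℂ) * Complex.I := by
      rw [hw, hw']; push_cast; ring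
    have hcc : Complex.cos (↑π*w/2) * Complex.cos (↑π*w'/2)
        = (Complex.cos (↑π*w/2 + ↑π*w'/2) + Complex.cos (↑π*w/2 - ↑π*w'/2))/2 := by
      rw [Complex.cos_add, Complex.cos_sub]; ring
    rw [hcc, hA, hB, Complex.cos_mul_I, ← Complex.ofReal_cosh, ← Complex.ofReal_cos, hcosβc]
    have hsq : Real.cos (π*β/2)^2 = (1 + Real.cos (π*β))/2 := by
      rw [Real.cos_sq]
      rw [show 2*(π*β/2) = π*β by ring]
      ring
    have hne : (1 + Real.cos (π*β)) ≠ 0 := by nlinarith [hcosβ, hsq, sq_nonneg (Real.cos (π*β/2))]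
    have hcosβ2ne : Real.cos (π*β/2) ≠ 0 := ne_of_gt hcosβ
    have hreal2 : (Real.cos (π*β) + Real.cosh (π*t))/2 / (Real.cos (π*β/2))^2
        = (Real.cosh (π*t) + Real.cos (π*β))/(1+Real.cos (π*β)) := by
      rw [hsq]
      rw [div_div_div_cancel_right₀]
      · ring_nf
      · norm_num
    have hstep : ((((Real.cos (π*β) : ℝ):ℂ) + ((Real.cosh (π*t) : ℝ):ℂ))/2
          / (((Real.cos (π*β/2) : ℝ):ℂ))^2 : ℂ)
        = ((((Real.cos (π*β) + Real.cosh (π*t))/2 / (Real.cos (π*β/2))^2 : ℝ)) : ℂ) := by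
      push_cast; ring
    rw [hstep, Complex.ofReal_inj]
    exact hreal2
  have hfinal := hcomb.congr (fun N => (hPN N).symm)
  rw [hval] at hfinal
  have hre := (Complex.continuous_re.tendsto _).comp hfinal
  simpa only [Function.comp_def, Complex.ofReal_re] using hre



lemma one_add_cos_pos {β : ℝ} (hβ : |β| < 1) : 0 < 1 + Real.cos (π*β) := by
  have hβ1 : -1 < β := neg_lt_of_abs_lt hβ
  have hβ2 : β < 1 := lt_of_abs_lt hβ
  have hcosβ : Real.cos (π*β/2) > 0 := by
    apply Real.cos_pos_of_mem_Ioo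
    constructor
    · nlinarith [Real.pi_pos]
    · nlinarith [Real.pi_pos]
  have hsq : Real.cos (π*β/2)^2 = (1 + Real.cos (π*β))/2 := by
    rw [Real.cos_sq, show 2*(π*β/2) = π*β by ring]
    ring
  nlinarith [hsq, hcosβ]

lemma log_hassum {β : ℝ} (hβ : |β| < 1) {t : ℝ} (ht : t ≠ 0) :
    HasSum (fun n : ℕ => Real.log (1 + t^2/(2*(n:ℝ)+1-β)^2)
        + Real.log (1 + t^2/(2*(n:ℝ)+1+β)^2))
      (Real.log ((Real.cosh (π*t) + Real.cos (π*β)) / (1 + Real.cos (π*β)))) := by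
  have hβ1 : -1 < β := neg_lt_of_abs_lt hβ
  have hβ2 : β < 1 := lt_of_abs_lt hβ
  set f : ℕ → ℝ := fun n => Real.log (1 + t^2/(2*(n:ℝ)+1-β)^2)
      + Real.log (1 + t^2/(2*(n:ℝ)+1+β)^2) with hf
  set R : ℝ := (Real.cosh (π*t) + Real.cos (π*β)) / (1 + Real.cos (π*β)) with hR
  have hcm : ∀ n : ℕ, (0:ℝ) < 2*(n:ℝ)+1-β ∧ (0:ℝ) < 2*(n:ℝ)+1+β := by
    intro n
    have h0 : (0:ℝ) ≤ (n:ℝ) := Nat.cast_nonneg n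
    constructor <;> nlinarith
  have hu1 : ∀ n : ℕ, (1:ℝ) ≤ 1 + t^2/(2*(n:ℝ)+1-β)^2 := by
    intro n
    have h1 := (hcm n).1
    have h2 : (0:ℝ) ≤ t^2/(2*(n:ℝ)+1-β)^2 := by positivity
    linarith
  have hv1 : ∀ n : ℕ, (1:ℝ) ≤ 1 + t^2/(2*(n:ℝ)+1+β)^2 := by
    intro n
    have h1 := (hcm n).2
    have h2 : (0:ℝ) ≤ t^2/(2*(n:ℝ)+1+β)^2 := by positivity
    linarith
  have hfnonneg : ∀ n, 0 ≤ f n := fun n =>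
    add_nonneg (Real.log_nonneg (hu1 n)) (Real.log_nonneg (hv1 n))
  have hS : ∀ N : ℕ, ∑ n ∈ Finset.range N, f n
      = Real.log (∏ n ∈ Finset.range N,
        ((1 + t^2/(2*(n:ℝ)+1-β)^2) * (1 + t^2/(2*(n:ℝ)+1+β)^2))) := by
    intro N
    rw [Real.log_prod]
    · apply Finset.sum_congr rfl
      intro n _
      rw [Real.log_mul (by linarith [hu1 n]) (by linarith [hv1 n])]
    · intro n _
      have := hu1 n; have := hv1 n
      positivity
  have hRpos : 0 < R := by
    apply div_pos ?_ (one_add_cos_pos hβ)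
    nlinarith [Real.one_le_cosh (π*t), one_add_cos_pos hβ]
  have hT : Tendsto (fun N : ℕ => ∑ n ∈ Finset.range N, f n) atTop (nhds (Real.log R)) := by
    apply Tendsto.congr (fun N => (hS N).symm)
    exact ((Real.continuousAt_log hRpos.ne').tendsto).comp (prod_limit hβ ht)
  have hmono : Monotone (fun N : ℕ => ∑ n ∈ Finset.range N, f n) := by
    intro i j hij
    exact Finset.sum_le_sum_of_subset_of_nonneg (Finset.range_subset_range.mpr hij)
      (fun k _ _ => hfnonneg k)
  have hbdd : ∀ N, ∑ n ∈ Finset.range N, f n ≤ Real.log R := fun N => hmono.ge_of_tendsto hT N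
  have hsummable : Summable f := summable_of_sum_range_le hfnonneg hbdd
  have h2 := hsummable.hasSum.tendsto_sum_nat
  have h3 : tsum f = Real.log R := tendsto_nhds_unique h2 hT
  exact h3 ▸ hsummable.hasSum


theorem stmt_12 (a β : ℝ) (hβ : |β| < 1) :
    ∫ x in Set.Ioi (0:ℝ), Real.sin (a * x) ^ 2 * Real.cosh (β * x) / (x * Real.sinh x) =
      (1 / 4) * Real.log ((Real.cosh (2 * a * π) + Real.cos (β * π)) /
        (1 + Real.cos (β * π))) := by
  have hβ1 : -1 < β := neg_lt_of_abs_lt hβ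
  have hβ2 : β < 1 := lt_of_abs_lt hβ
  have hcosne : (1 + Real.cos (β * π)) ≠ 0 := by
    have := one_add_cos_pos hβ
    rw [mul_comm β π]
    exact ne_of_gt this
  by_cases ha : a = 0
  · subst ha
    simp only [zero_mul, Real.sin_zero, ne_eq, OfNat.ofNat_ne_zero, not_false_eq_true,
      zero_pow, zero_div, integral_zero, mul_zero, zero_mul]
    rw [Real.cosh_zero, div_self hcosne, Real.log_one, mul_zero]
  -- main case
  have ht : (2*a) ≠ 0 := by simpa using ha
  have hcm : ∀ n : ℕ, (0:ℝ) < 2*(n:ℝ)+1-β := by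
    intro n; have h0 : (0:ℝ) ≤ (n:ℝ) := Nat.cast_nonneg n; nlinarith
  have hcp : ∀ n : ℕ, (0:ℝ) < 2*(n:ℝ)+1+β := by
    intro n; have h0 : (0:ℝ) ≤ (n:ℝ) := Nat.cast_nonneg n; nlinarith
  set g : ℕ → ℝ → ℝ := fun n x =>
      Real.sin (a*x)^2 * Real.exp (-((2*(n:ℝ)+1-β)*x))/x
      + Real.sin (a*x)^2 * Real.exp (-((2*(n:ℝ)+1+β)*x))/x with hg
  -- pointwise series expansion of the integrand
  have hpt : ∀ x ∈ Ioi (0:ℝ), Real.sin (a * x) ^ 2 * Real.cosh (β * x) / (x * Real.sinh x)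
      = ∑' n : ℕ, g n x := by
    intro x hx
    rw [mem_Ioi] at hx
    have hs := (series_cosh_sinh (β := β) x hx).mul_left (Real.sin (a*x)^2 / x)
    calc Real.sin (a * x) ^ 2 * Real.cosh (β * x) / (x * Real.sinh x)
        = (Real.sin (a*x)^2 / x) * (Real.cosh (β*x) / Real.sinh x) := by ring
      _ = ∑' n : ℕ, (Real.sin (a*x)^2 / x)
            * (Real.exp (-((2*(n:ℝ)+1-β)*x)) + Real.exp (-((2*(n:ℝ)+1+β)*x))) := hs.tsum_eq.symm
      _ = ∑' n : ℕ, g n x := by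
          apply tsum_congr
          intro n
          rw [hg]
          ring
  rw [setIntegral_congr_fun measurableSet_Ioi hpt]
  -- interchange sum and integral
  have hmeas : ∀ (c : ℝ), AEStronglyMeasurable (fun x => Real.sin (a*x)^2 * Real.exp (-(c*x))/x)
      (volume.restrict (Ioi 0)) := by
    intro c
    apply ContinuousOn.aestronglyMeasurable ?_ measurableSet_Ioi
    apply ContinuousOn.div ((Continuous.mul (by continuity) (by continuity)).continuousOn)
      continuousOn_id
    intro x hx; exact ne_of_gt hx
  have hgmeas : ∀ n : ℕ, AEStronglyMeasurable (g n) (volume.restrict (Ioi 0)) := by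
    intro n
    exact (hmeas (2*(n:ℝ)+1-β)).add (hmeas (2*(n:ℝ)+1+β))
  have hgint : ∀ n : ℕ, IntegrableOn (g n) (Ioi 0) := by
    intro n
    exact (sin_sq_exp_integrable (hcm n) a).add (sin_sq_exp_integrable (hcp n) a)
  have hgval : ∀ n : ℕ, ∫ x in Ioi (0:ℝ), g n x
      = (1/4) * Real.log (1 + (2*a)^2/(2*(n:ℝ)+1-β)^2)
        + (1/4) * Real.log (1 + (2*a)^2/(2*(n:ℝ)+1+β)^2) := by
    intro n
    rw [hg]
    rw [integral_add (sin_sq_exp_integrable (hcm n) a) (sin_sq_exp_integrable (hcp n) a)]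
    rw [log_integral (hcm n) a, log_integral (hcp n) a]
    congr 3 <;> ring
  have hgnn : ∀ n : ℕ, 0 ≤ᵐ[volume.restrict (Ioi 0)] g n := by
    intro n
    filter_upwards [ae_restrict_mem measurableSet_Ioi] with x hx
    rw [mem_Ioi] at hx
    rw [hg]
    positivity
  have hlint : ∀ n : ℕ, ∫⁻ x in Ioi (0:ℝ), ‖g n x‖₊
      = ENNReal.ofReal (∫ x in Ioi (0:ℝ), g n x) := by
    intro n
    rw [ofReal_integral_eq_lintegral_ofReal (hgint n) (hgnn n)]
    apply lintegral_congr_ae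
    filter_upwards [hgnn n] with x hx
    exact Real.enorm_eq_ofReal hx
  -- summable bound
  obtain ⟨D, hD⟩ : ∃ D : ℝ, D = 1 - |β| := ⟨_, rfl⟩
  have hDpos : 0 < D := by rw [hD]; linarith [hβ]
  have hlogle : ∀ y : ℝ, 0 ≤ y → Real.log (1+y) ≤ y := by
    intro y hy
    have := Real.log_le_sub_one_of_pos (show (0:ℝ) < 1+y by linarith)
    linarith
  have hIle : ∀ n : ℕ, (∫ x in Ioi (0:ℝ), g n x) ≤ (2*a)^2/(2*D^2) * (1/((n:ℝ)+1)^2) := by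
    intro n
    rw [hgval n]
    have h0 : (0:ℝ) ≤ (n:ℝ) := Nat.cast_nonneg n
    have habs1 : β ≤ |β| := le_abs_self β
    have habs2 : -β ≤ |β| := neg_le_abs β
    have hDn : 0 < D * ((n:ℝ)+1) := by positivity
    have hb1 : D * ((n:ℝ)+1) ≤ 2*(n:ℝ)+1-β := by rw [hD]; nlinarith [abs_nonneg β]
    have hb2 : D * ((n:ℝ)+1) ≤ 2*(n:ℝ)+1+β := by rw [hD]; nlinarith [abs_nonneg β]
    have key : ∀ c : ℝ, D * ((n:ℝ)+1) ≤ c →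
        (1/4) * Real.log (1 + (2*a)^2/c^2) ≤ (2*a)^2/(4*D^2) * (1/((n:ℝ)+1)^2) := by
      intro c hcge
      have hcpos : 0 < c := lt_of_lt_of_le hDn hcge
      have h1 : (1/4) * Real.log (1 + (2*a)^2/c^2) ≤ (1/4) * ((2*a)^2/c^2) := by
        have := hlogle ((2*a)^2/c^2) (by positivity)
        linarith
      have h2 : (2*a)^2/c^2 ≤ (2*a)^2/(D*((n:ℝ)+1))^2 := by
        gcongr
      calc (1/4) * Real.log (1 + (2*a)^2/c^2) ≤ (1/4) * ((2*a)^2/c^2) := h1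
        _ ≤ (1/4) * ((2*a)^2/(D*((n:ℝ)+1))^2) := by linarith
        _ = (2*a)^2/(4*D^2) * (1/((n:ℝ)+1)^2) := by
            rw [mul_pow]
            field_simp
    have k1 := key _ hb1
    have k2 := key _ hb2
    have : (2*a)^2/(2*D^2) * (1/((n:ℝ)+1)^2)
        = (2*a)^2/(4*D^2) * (1/((n:ℝ)+1)^2) + (2*a)^2/(4*D^2) * (1/((n:ℝ)+1)^2) := by ring
    rw [this]
    exact add_le_add k1 k2
  have hBsum : Summable (fun n : ℕ => (2*a)^2/(2*D^2) * (1/((n:ℝ)+1)^2)) := by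
    apply Summable.mul_left
    have h1 : Summable (fun n : ℕ => 1/((n:ℝ)+1)^2) := by
      have := (summable_nat_add_iff (f := fun n : ℕ => 1/(n:ℝ)^2) 1).mpr
        ((Real.summable_one_div_nat_pow (p := 2)).mpr one_lt_two)
      simpa using this
    exact h1
  have hfin : (∑' n : ℕ, ∫⁻ x in Ioi (0:ℝ), ‖g n x‖₊) ≠ ⊤ := by
    have hle : (∑' n : ℕ, ∫⁻ x in Ioi (0:ℝ), ‖g n x‖₊)
        < ⊤ := by
      calc (∑' n : ℕ, ∫⁻ x in Ioi (0:ℝ), ‖g n x‖₊)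
          = ∑' n : ℕ, ENNReal.ofReal (∫ x in Ioi (0:ℝ), g n x) := tsum_congr hlint
        _ ≤ ∑' n : ℕ, ENNReal.ofReal ((2*a)^2/(2*D^2) * (1/((n:ℝ)+1)^2)) :=
            ENNReal.tsum_le_tsum (fun n => ENNReal.ofReal_le_ofReal (hIle n))
        _ = ENNReal.ofReal (∑' n : ℕ, (2*a)^2/(2*D^2) * (1/((n:ℝ)+1)^2)) :=
            (ENNReal.ofReal_tsum_of_nonneg (fun n => by positivity) hBsum).symm
        _ < ⊤ := ENNReal.ofReal_lt_top
    exact hle.ne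
  rw [integral_tsum hgmeas hfin]
  -- evaluate the sum
  have hls := (log_hassum hβ ht).mul_left (1/4)
  have htsum : ∑' n : ℕ, ∫ x in Ioi (0:ℝ), g n x
      = (1/4) * Real.log ((Real.cosh (π*(2*a)) + Real.cos (π*β)) / (1 + Real.cos (π*β))) := by
    rw [show (fun n : ℕ => ∫ x in Ioi (0:ℝ), g n x) = fun n : ℕ =>
        (1/4) * (Real.log (1 + (2*a)^2/(2*(n:ℝ)+1-β)^2)
          + Real.log (1 + (2*a)^2/(2*(n:ℝ)+1+β)^2)) from funext (fun n => by rw [hgval n]; ring)]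
    exact hls.tsum_eq
  rw [htsum]
  rw [show π*(2*a) = 2*a*π by ring, show π*β = β*π by ring]
end
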